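/- arXiv:1005.2616 — 2 statements merged into one kernel-verified Lean document; each statement's English description precedes it below -/
import Mathlib

section
/- If m chains of length ℓ are allocated to n bins arranged cyclically, then for any integer i ≥ 1, the number of bins j such that an allocation of a chain header to bin j would increase the load of some bin already of load at least i satisfies θ_{≥i}(m) ≤ 2mℓ/i. -/
open Finset

/-- For m chains of length ℓ allocated cyclically to n bins (header of
chain `c` at bin `h c`, occupying bins `h c, h c + 1, ..., h c + ℓ - 1`), for any
`i ≥ 1` the set `S_i` of bins whose receipt of a chain header would increase the load
of some bin of load at least `i` satisfies `θ_{≥i}(m) = |S_i| ≤ 2mℓ/i`. -/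
theorem chains_into_bins_theta_le (n m ℓ : ℕ) [NeZero n] (i : ℕ) (hi : 1 ≤ i)
    (h : Fin m → ZMod n) :
    i * (Finset.univ.filter (fun b : ZMod n =>
        ∃ k : Fin ℓ, i ≤ (Finset.univ.filter (fun p : Fin m × Fin ℓ =>
          h p.1 + ((p.2 : ℕ) : ZMod n) = b + ((k : ℕ) : ZMod n))).card)).card
      ≤ 2 * m * ℓ := by
  classical
  rcases Nat.eq_zero_or_pos ℓ with hℓ | hℓ
  · subst hℓ
    simp
  set pred : ZMod n → Prop := fun b =>
    ∃ k : Fin ℓ, i ≤ (Finset.univ.filter (fun p : Fin m × Fin ℓ =>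
      h p.1 + ((p.2 : ℕ) : ZMod n) = b + ((k : ℕ) : ZMod n))).card with hpred
  set κ : ZMod n → Fin ℓ := fun b => if hb : pred b then hb.choose else ⟨0, hℓ⟩ with hκ
  set P : ZMod n → Finset (Fin m × Fin ℓ) := fun b =>
    Finset.univ.filter (fun p : Fin m × Fin ℓ =>
      h p.1 + ((p.2 : ℕ) : ZMod n) = b + (((κ b : ℕ)) : ZMod n)) with hP
  set T : Finset (ZMod n) := Finset.univ.filter pred with hT
  have hPb : ∀ b ∈ T, i ≤ (P b).card := by
    intro b hb
    rw [hT, Finset.mem_filter] at hb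
    have hbp : pred b := hb.2
    have := hbp.choose_spec
    simpa [hP, hκ, dif_pos hbp] using this
  -- i * |T| ≤ card of the sigma set
  have step1 : i * T.card ≤ (T.sigma P).card := by
    rw [Finset.card_sigma]
    calc i * T.card = ∑ _b ∈ T, i := by rw [Finset.sum_const, smul_eq_mul, mul_comm]
    _ ≤ ∑ b ∈ T, (P b).card := Finset.sum_le_sum hPb
  -- inject the sigma set into Fin m × range (2ℓ - 1)
  have step2 : (T.sigma P).card ≤ ((Finset.univ : Finset (Fin m)) ×ˢ Finset.range (2 * ℓ - 1)).card := by
    apply Finset.card_le_card_of_injOn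
      (fun x => (x.2.1, (x.2.2 : ℕ) + (ℓ - 1) - (κ x.1 : ℕ)))
    · rintro ⟨b, c, k'⟩ hx
      simp only [Finset.mem_coe, Finset.mem_product, Finset.mem_univ, true_and, Finset.mem_range]
      have h1 : (k' : ℕ) < ℓ := k'.2
      have h2 : (κ b : ℕ) < ℓ := (κ b).2
      omega
    · rintro ⟨b₁, c₁, k₁⟩ hx₁ ⟨b₂, c₂, k₂⟩ hx₂ heq
      simp only [Finset.mem_coe, Finset.mem_sigma] at hx₁ hx₂
      have hm₁ := hx₁.2
      have hm₂ := hx₂.2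
      rw [hP, Finset.mem_filter] at hm₁ hm₂
      have e₁ : h c₁ + ((k₁ : ℕ) : ZMod n) = b₁ + ((κ b₁ : ℕ) : ZMod n) := hm₁.2
      have e₂ : h c₂ + ((k₂ : ℕ) : ZMod n) = b₂ + ((κ b₂ : ℕ) : ZMod n) := hm₂.2
      have hc : c₁ = c₂ := congrArg Prod.fst heq
      have hv : (k₁ : ℕ) + (ℓ - 1) - (κ b₁ : ℕ) = (k₂ : ℕ) + (ℓ - 1) - (κ b₂ : ℕ) :=
        congrArg Prod.snd heq
      have hk₁ : (k₁ : ℕ) < ℓ := k₁.2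
      have hk₂ : (k₂ : ℕ) < ℓ := k₂.2
      have hκ₁ : (κ b₁ : ℕ) < ℓ := (κ b₁).2
      have hκ₂ : (κ b₂ : ℕ) < ℓ := (κ b₂).2
      have hnat : (k₁ : ℕ) + (κ b₂ : ℕ) = (k₂ : ℕ) + (κ b₁ : ℕ) := by omega
      have hz : ((k₁ : ℕ) : ZMod n) + ((κ b₂ : ℕ) : ZMod n)
          = ((k₂ : ℕ) : ZMod n) + ((κ b₁ : ℕ) : ZMod n) := by
        exact_mod_cast congrArg (fun t : ℕ => (t : ZMod n)) hnat
      have hb : b₁ = b₂ := by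
        have t₁ : b₁ = h c₁ + ((k₁ : ℕ) : ZMod n) - ((κ b₁ : ℕ) : ZMod n) := by
          rw [e₁]; ring
        have t₂ : b₂ = h c₂ + ((k₂ : ℕ) : ZMod n) - ((κ b₂ : ℕ) : ZMod n) := by
          rw [e₂]; ring
        rw [t₁, t₂, hc]
        have : ((k₁ : ℕ) : ZMod n) - ((κ b₁ : ℕ) : ZMod n)
            = ((k₂ : ℕ) : ZMod n) - ((κ b₂ : ℕ) : ZMod n) := by
          have := hz; linear_combination hz
        rw [add_sub_assoc, add_sub_assoc, this]
      have hk : k₁ = k₂ := by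
        apply Fin.ext
        rw [hb] at hnat
        omega
      subst hb hc hk
      rfl
  have step3 : ((Finset.univ : Finset (Fin m)) ×ˢ Finset.range (2 * ℓ - 1)).card ≤ 2 * m * ℓ := by
    rw [Finset.card_product, Finset.card_univ, Fintype.card_fin, Finset.card_range]
    calc m * (2 * ℓ - 1) ≤ m * (2 * ℓ) := Nat.mul_le_mul_left m (Nat.sub_le _ _)
    _ = 2 * m * ℓ := by ring
  calc i * T.card ≤ (T.sigma P).card := step1
  _ ≤ _ := step2
  _ ≤ 2 * m * ℓ := step3
end

section
/- If m ≤ n/(2e) balls are thrown independently and uniformly at random into n bins, then the expected number of occupied (nonempty) bins, which equals n(1 - (1 - 1/n)^m), is at least 0.9m. -/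
/-- if m ≤ n/(2e) balls are thrown i.u.r. into n bins, the expected number of
occupied bins, n(1 - (1 - 1/n)^m), is at least 0.9m. -/
theorem expected_occupied_bins (n m : ℕ) (hn : 1 ≤ n)
    (hm : (m : ℝ) ≤ (n : ℝ) / (2 * Real.exp 1)) :
    0.9 * (m : ℝ) ≤ (n : ℝ) * (1 - (1 - 1 / (n : ℝ)) ^ m) := by
  have hn' : (1:ℝ) ≤ (n:ℝ) := by exact_mod_cast hn
  have hnpos : (0:ℝ) < (n:ℝ) := by linarith
  set x : ℝ := (m:ℝ) / (n:ℝ) with hx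
  have hx0 : 0 ≤ x := div_nonneg (Nat.cast_nonneg m) hnpos.le
  have he : (2.7182818283 : ℝ) < Real.exp 1 := Real.exp_one_gt_d9
  have hxle : x ≤ (0.2 : ℝ) := by
    have h1 : x ≤ 1 / (2 * Real.exp 1) := by
      rw [hx, div_le_div_iff₀ hnpos (by positivity)]
      rw [le_div_iff₀ (by positivity)] at hm
      linarith
    have h2 : (1:ℝ) / (2 * Real.exp 1) ≤ 0.2 := by
      rw [div_le_iff₀ (by positivity)]; nlinarith
    linarith
  -- step 1 : (1-1/n)^m ≤ exp (-x)
  have h0 : (0:ℝ) ≤ 1 - 1/(n:ℝ) := by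
    have : 1/(n:ℝ) ≤ 1 := by rw [div_le_one hnpos]; exact hn'
    linarith
  have h1 : (1:ℝ) - 1/(n:ℝ) ≤ Real.exp (-(1/(n:ℝ))) := by
    have := Real.add_one_le_exp (-(1/(n:ℝ)))
    linarith
  have hexp1 : (1 - 1/(n:ℝ))^m ≤ Real.exp (-x) := by
    calc (1 - 1/(n:ℝ))^m ≤ (Real.exp (-(1/(n:ℝ))))^m := pow_le_pow_left₀ h0 h1 m
      _ = Real.exp (-x) := by
          rw [← Real.exp_nat_mul]
          congr 1
          field_simp [hx]
          rw [hx]; field_simp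
  -- step 2 : exp (-x) ≤ 1 - x + x^2/2
  have hq : 1 + x + x^2/2 ≤ Real.exp x := by
    have h := Real.sum_le_exp_of_nonneg hx0 3
    simp [Finset.sum_range_succ] at h
    nlinarith
  have hpos : (0:ℝ) < 1 + x + x^2/2 := by positivity
  have hinv : Real.exp (-x) ≤ 1/(1 + x + x^2/2) := by
    rw [Real.exp_neg, inv_eq_one_div]
    exact one_div_le_one_div_of_le hpos hq
  have h2 : 1/(1 + x + x^2/2) ≤ 1 - x + x^2/2 := by
    rw [div_le_iff₀ hpos]
    nlinarith [sq_nonneg (x^2)]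
  have hfin : (1 - 1/(n:ℝ))^m ≤ 1 - x + x^2/2 := hexp1.trans (hinv.trans h2)
  -- step 3 : conclude
  have hxn : x * (n:ℝ) = (m:ℝ) := by
    field_simp [hx]
    rw [hx]; field_simp
  nlinarith [mul_nonneg hx0 (Nat.cast_nonneg m : (0:ℝ) ≤ m)]
end
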